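/- For every n ≥ 2 and every i with 1 ≤ i ≤ n-1, the matrix E_i := I_n + ∑_{k=1}^{n-1} (J_n^{ki} + (J_nᵀ)^{ki}) admits an integer completely positive factorization E_i = U_i U_iᵀ with U_i entrywise nonnegative integers. Consequently, any nonnegative-integer combination ∑ a_i E_i admits an integer completely positive factorization. -/
import Mathlib


open Matrix

section Aux

variable {n : ℕ}

lemma jpow_entry (J : Matrix (Fin n) (Fin n) ℤ)
    (hJ : ∀ i j : Fin n, J i j = if i.val + 1 = j.val then 1 else 0) :
    ∀ (m : ℕ) (r s : Fin n), (J ^ m) r s = if (r : ℕ) + m = (s : ℕ) then 1 else 0 := by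
  intro m
  induction m with
  | zero =>
    intro r s
    simp [Matrix.one_apply, Fin.ext_iff, eq_comm]
  | succ m ih =>
    intro r s
    rw [pow_succ, Matrix.mul_apply]
    by_cases h : (r : ℕ) + (m + 1) = (s : ℕ)
    · have hlt : (r : ℕ) + m < n := by omega
      rw [Finset.sum_eq_single (⟨(r : ℕ) + m, hlt⟩ : Fin n)]
      · rw [ih, hJ]
        simp only [if_pos rfl]
        have : ((⟨(r : ℕ) + m, hlt⟩ : Fin n) : ℕ) + 1 = (s : ℕ) := by simp; omega
        simp [this, h]
      · intro t _ ht
        rw [ih, hJ]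
        have : (r : ℕ) + m ≠ (t : ℕ) := fun hc => ht (Fin.ext hc.symm)
        simp [this]
      · simp
    · rw [if_neg h]
      apply Finset.sum_eq_zero
      intro t _
      rw [ih, hJ]
      by_cases h1 : (r : ℕ) + m = (t : ℕ)
      · have : (t : ℕ) + 1 ≠ (s : ℕ) := by omega
        simp [this]
      · simp [h1]

lemma count_sum (N i r s : ℕ) (hi : 1 ≤ i) (hrs : r < s) (hN : s - r ≤ N) :
    ∑ k ∈ Finset.Icc 1 N, (if r + k * i = s then (1 : ℤ) else 0)
      = if i ∣ (s - r) then 1 else 0 := by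
  by_cases hd : i ∣ (s - r)
  · obtain ⟨k0, hk0⟩ := hd
    rw [if_pos ⟨k0, hk0⟩]
    have hk0pos : 1 ≤ k0 := by
      rcases Nat.eq_zero_or_pos k0 with h | h
      · subst h; simp at hk0; omega
      · exact h
    have hk0le : k0 ≤ N := by
      have : k0 ≤ i * k0 := Nat.le_mul_of_pos_left k0 (by omega)
      omega
    rw [Finset.sum_eq_single_of_mem k0 (Finset.mem_Icc.mpr ⟨hk0pos, hk0le⟩)]
    · rw [if_pos (by rw [Nat.mul_comm]; omega)]
    · intro k _ hk
      rw [if_neg]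
      intro hc
      apply hk
      have hk0' : s - r = k0 * i := by rw [Nat.mul_comm] at hk0; exact hk0
      have : k * i = k0 * i := by omega
      exact Nat.eq_of_mul_eq_mul_right (by omega) this
  · rw [if_neg hd]
    apply Finset.sum_eq_zero
    intro k _
    rw [if_neg]
    intro hc
    exact hd ⟨k, by rw [Nat.mul_comm]; omega⟩
lemma my_inner_sum (i r s : ℕ) (hi : 1 ≤ i) :
    ∑ c : Fin i, (if r % i = (c : ℕ) then (1 : ℤ) else 0) * (if s % i = (c : ℕ) then 1 else 0)
      = if r % i = s % i then 1 else 0 := by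
  have hri : r % i < i := Nat.mod_lt _ (by omega)
  rw [Finset.sum_eq_single (⟨r % i, hri⟩ : Fin i)]
  · by_cases h : r % i = s % i
    · simp [h]
    · have h' : ¬ s % i = r % i := fun hc => h hc.symm
      simp [h, h']
  · intro c _ hc
    have : r % i ≠ (c : ℕ) := fun hcc => hc (Fin.ext hcc.symm)
    simp [this]
  · simp

lemma E_entry (hn : 2 ≤ n) (J : Matrix (Fin n) (Fin n) ℤ)
    (hJ : ∀ i j : Fin n, J i j = if i.val + 1 = j.val then 1 else 0)
    (E : ℕ → Matrix (Fin n) (Fin n) ℤ)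
    (hE : ∀ i : ℕ, E i = 1 + ∑ k ∈ Finset.Icc 1 (n - 1), (J ^ (k * i) + (Jᵀ) ^ (k * i)))
    (i : ℕ) (hi1 : 1 ≤ i) (r s : Fin n) :
    E i r s = if (r : ℕ) % i = (s : ℕ) % i then 1 else 0 := by
  have hJt : ∀ (m : ℕ) (r s : Fin n), ((Jᵀ) ^ m) r s = if (s : ℕ) + m = (r : ℕ) then 1 else 0 := by
    intro m r s
    rw [← Matrix.transpose_pow, Matrix.transpose_apply, jpow_entry J hJ]
  have hkpos : ∀ k ∈ Finset.Icc 1 (n - 1), 1 ≤ k * i := by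
    intro k hk
    rw [Finset.mem_Icc] at hk
    exact Nat.mul_pos (by omega) (by omega)
  rw [hE]
  simp only [Matrix.add_apply, Matrix.sum_apply, jpow_entry J hJ, hJt]
  rw [Finset.sum_add_distrib]
  rcases lt_trichotomy (r : ℕ) (s : ℕ) with h | h | h
  · have h1 : (1 : Matrix (Fin n) (Fin n) ℤ) r s = 0 :=
      Matrix.one_apply_ne (fun hc => by rw [hc] at h; omega)
    have h2 : ∑ k ∈ Finset.Icc 1 (n - 1), (if (s : ℕ) + k * i = (r : ℕ) then (1 : ℤ) else 0) = 0 := by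
      apply Finset.sum_eq_zero
      intro k hk
      have := hkpos k hk
      rw [if_neg (by omega)]
    have h3 : ∑ k ∈ Finset.Icc 1 (n - 1), (if (r : ℕ) + k * i = (s : ℕ) then (1 : ℤ) else 0)
        = if i ∣ ((s : ℕ) - (r : ℕ)) then 1 else 0 := by
      apply count_sum _ _ _ _ hi1 h
      have := s.isLt
      omega
    rw [h1, h2, h3]
    have : ((r : ℕ) % i = (s : ℕ) % i) ↔ i ∣ ((s : ℕ) - (r : ℕ)) := Nat.modEq_iff_dvd' (le_of_lt h)
    by_cases hd : i ∣ ((s : ℕ) - (r : ℕ)) <;> simp [hd, this]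
  · have hrs : r = s := Fin.ext h
    subst hrs
    have h2 : ∀ (t : ℕ), ∑ k ∈ Finset.Icc 1 (n - 1), (if t + k * i = t then (1 : ℤ) else 0) = 0 := by
      intro t
      apply Finset.sum_eq_zero
      intro k hk
      have := hkpos k hk
      rw [if_neg (by omega)]
    rw [Matrix.one_apply_eq, h2]
    simp [h2]
  · have h1 : (1 : Matrix (Fin n) (Fin n) ℤ) r s = 0 :=
      Matrix.one_apply_ne (fun hc => by rw [hc] at h; omega)
    have h2 : ∑ k ∈ Finset.Icc 1 (n - 1), (if (r : ℕ) + k * i = (s : ℕ) then (1 : ℤ) else 0) = 0 := by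
      apply Finset.sum_eq_zero
      intro k hk
      have := hkpos k hk
      rw [if_neg (by omega)]
    have h3 : ∑ k ∈ Finset.Icc 1 (n - 1), (if (s : ℕ) + k * i = (r : ℕ) then (1 : ℤ) else 0)
        = if i ∣ ((r : ℕ) - (s : ℕ)) then 1 else 0 := by
      apply count_sum _ _ _ _ hi1 h
      have := r.isLt
      omega
    rw [h1, h2, h3]
    have heq : ((s : ℕ) % i = (r : ℕ) % i) ↔ i ∣ ((r : ℕ) - (s : ℕ)) := Nat.modEq_iff_dvd' (le_of_lt h)
    by_cases hd : i ∣ ((r : ℕ) - (s : ℕ))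
    · have := (heq.mpr hd).symm
      simp [hd, this]
    · have : ¬ ((r : ℕ) % i = (s : ℕ) % i) := fun hc => hd (heq.mp hc.symm)
      simp [hd, this]

end Aux

theorem stmt_18 (n : ℕ) (hn : 2 ≤ n)
    (J : Matrix (Fin n) (Fin n) ℤ)
    (hJ : ∀ i j : Fin n, J i j = if i.val + 1 = j.val then 1 else 0)
    (E : ℕ → Matrix (Fin n) (Fin n) ℤ)
    (hE : ∀ i : ℕ, E i = 1 + ∑ k ∈ Finset.Icc 1 (n - 1), (J ^ (k * i) + (Jᵀ) ^ (k * i))) :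
    (∀ i : ℕ, 1 ≤ i → i ≤ n - 1 →
      ∃ (m : ℕ) (U : Matrix (Fin n) (Fin m) ℕ),
        E i = (U.map (fun x : ℕ => (x : ℤ))) * (U.map (fun x : ℕ => (x : ℤ)))ᵀ) ∧
    (∀ a : ℕ → ℕ,
      ∃ (m : ℕ) (U : Matrix (Fin n) (Fin m) ℕ),
        ∑ i ∈ Finset.Icc 1 (n - 1), (a i : ℤ) • E i
          = (U.map (fun x : ℕ => (x : ℤ))) * (U.map (fun x : ℕ => (x : ℤ)))ᵀ) := by
  classical
  constructor
  · intro i hi1 hi2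
    refine ⟨i, Matrix.of (fun r (c : Fin i) => if (r : ℕ) % i = (c : ℕ) then 1 else 0), ?_⟩
    ext r s
    rw [E_entry hn J hJ E hE i hi1 r s, Matrix.mul_apply]
    simp only [Matrix.map_apply, Matrix.transpose_apply, Matrix.of_apply]
    simp only [apply_ite (fun x : ℕ => (x : ℤ)), Nat.cast_one, Nat.cast_zero]
    exact (my_inner_sum i (r : ℕ) (s : ℕ) hi1).symm
  · intro a
    refine ⟨Fintype.card (Σ i : Fin (n - 1), (Fin (a ((i : ℕ) + 1)) × Fin ((i : ℕ) + 1))),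
      Matrix.of (fun r c =>
        let x := (Fintype.equivFin (Σ i : Fin (n - 1),
          (Fin (a ((i : ℕ) + 1)) × Fin ((i : ℕ) + 1)))).symm c
        if (r : ℕ) % ((x.1 : ℕ) + 1) = (x.2.2 : ℕ) then 1 else 0), ?_⟩
    ext r s
    rw [Matrix.sum_apply, Matrix.mul_apply]
    simp only [Matrix.map_apply, Matrix.transpose_apply, Matrix.of_apply,
      Matrix.smul_apply, smul_eq_mul]
    simp only [apply_ite (fun x : ℕ => (x : ℤ)), Nat.cast_one, Nat.cast_zero]
    rw [Equiv.sum_comp (Fintype.equivFin (Σ i : Fin (n - 1),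
          (Fin (a ((i : ℕ) + 1)) × Fin ((i : ℕ) + 1)))).symm
      (fun x => (if (r : ℕ) % ((x.1 : ℕ) + 1) = (x.2.2 : ℕ) then (1 : ℤ) else 0) *
        (if (s : ℕ) % ((x.1 : ℕ) + 1) = (x.2.2 : ℕ) then 1 else 0))]
    rw [← Finset.univ_sigma_univ, Finset.sum_sigma]
    have hrhs : ∀ i : Fin (n - 1),
        ∑ p : Fin (a ((i : ℕ) + 1)) × Fin ((i : ℕ) + 1),
          (if (r : ℕ) % ((i : ℕ) + 1) = (p.2 : ℕ) then (1 : ℤ) else 0) *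
          (if (s : ℕ) % ((i : ℕ) + 1) = (p.2 : ℕ) then 1 else 0)
        = (a ((i : ℕ) + 1) : ℤ) *
          (if (r : ℕ) % ((i : ℕ) + 1) = (s : ℕ) % ((i : ℕ) + 1) then 1 else 0) := by
      intro i
      rw [Fintype.sum_prod_type]
      rw [Finset.sum_congr rfl (fun t _ => my_inner_sum ((i : ℕ) + 1) (r : ℕ) (s : ℕ) (by omega))]
      rw [Finset.sum_const, Finset.card_univ, Fintype.card_fin, nsmul_eq_mul]
    calc ∑ j ∈ Finset.Icc 1 (n - 1), (a j : ℤ) * E j r s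
        = ∑ j ∈ Finset.Icc 1 (n - 1), (a j : ℤ) *
            (if (r : ℕ) % j = (s : ℕ) % j then 1 else 0) := by
          apply Finset.sum_congr rfl
          intro j hj
          rw [Finset.mem_Icc] at hj
          rw [E_entry hn J hJ E hE j hj.1 r s]
      _ = ∑ k ∈ Finset.range (n - 1), (a (1 + k) : ℤ) *
            (if (r : ℕ) % (1 + k) = (s : ℕ) % (1 + k) then 1 else 0) := by
          rw [show Finset.Icc 1 (n - 1) = Finset.Ico 1 n by
              rw [← Finset.Ico_add_one_right_eq_Icc]; congr 1; omega,
            Finset.sum_Ico_eq_sum_range]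
      _ = ∑ k ∈ Finset.range (n - 1), (a (k + 1) : ℤ) *
            (if (r : ℕ) % (k + 1) = (s : ℕ) % (k + 1) then 1 else 0) := by
          exact Finset.sum_congr rfl (fun k _ => by rw [Nat.add_comm 1 k])
      _ = ∑ i : Fin (n - 1), (a ((i : ℕ) + 1) : ℤ) *
            (if (r : ℕ) % ((i : ℕ) + 1) = (s : ℕ) % ((i : ℕ) + 1) then 1 else 0) := by
          exact (Fin.sum_univ_eq_sum_range
            (fun k => (a (k + 1) : ℤ) *
              (if (r : ℕ) % (k + 1) = (s : ℕ) % (k + 1) then 1 else 0)) (n - 1)).symm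
      _ = _ := by
          exact Finset.sum_congr rfl (fun i _ => (hrhs i).symm)
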